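/- Let R be a commutative ring and m̄ : ℕ →₀ ℕ be a finitely supported exponent vector. Then any two m̄-monomials (ring terms over R built only from variables and the binary symbol ·, in which each variable X i occurs exactly m̄ i times; for m̄ = 0 the unique m̄-monomial is the term 1) are f-equivalent. -/
import Mathlib


/-- Ring terms over a commutative ring `R`. -/
inductive RingTerm (R : Type*) where
  | X : ℕ → RingTerm R
  | C : R → RingTerm R
  | zero : RingTerm R
  | one : RingTerm R
  | add : RingTerm R → RingTerm R → RingTerm R
  | mul : RingTerm R → RingTerm R → RingTerm R

namespace RingTerm

variable {R : Type*} [CommRing R]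

/-- The evaluation map `Ψ` into multivariate polynomials. -/
noncomputable def psi : RingTerm R → MvPolynomial ℕ R
  | X i => MvPolynomial.X i
  | C r => MvPolynomial.C r
  | zero => 0
  | one => 1
  | add t u => psi t + psi u
  | mul t u => psi t * psi u

/-- One-step elementary transformation: the twelve rules ET−1 … ET10,
closed under the term-forming operations (compatible closure). -/
inductive Step : RingTerm R → RingTerm R → Prop where
  | etm1 : Step zero (C 0)
  | et0 : Step one (C 1)
  | et1 (r s : R) : Step (add (C r) (C s)) (C (r + s))
  | et2 (r s : R) : Step (mul (C r) (C s)) (C (r * s))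
  | et3 (u : RingTerm R) : Step (add zero u) u
  | et4 (u : RingTerm R) : Step (mul one u) u
  | et5 (u u' : RingTerm R) : Step (add u u') (add u' u)
  | et6 (u u' : RingTerm R) : Step (mul u u') (mul u' u)
  | et7 (u u' u'' : RingTerm R) : Step (add u (add u' u'')) (add (add u u') u'')
  | et8 (u u' u'' : RingTerm R) : Step (mul u (mul u' u'')) (mul (mul u u') u'')
  | et9 (u u' u'' : RingTerm R) :
      Step (mul u (add u' u'')) (add (mul u u') (mul u u''))
  | et10 (u : RingTerm R) : Step (mul zero u) zero
  | addLeft {t t' : RingTerm R} (u : RingTerm R) :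
      Step t t' → Step (add t u) (add t' u)
  | addRight (u : RingTerm R) {t t' : RingTerm R} :
      Step t t' → Step (add u t) (add u t')
  | mulLeft {t t' : RingTerm R} (u : RingTerm R) :
      Step t t' → Step (mul t u) (mul t' u)
  | mulRight (u : RingTerm R) {t t' : RingTerm R} :
      Step t t' → Step (mul u t) (mul u t')

/-- f-equivalence: the equivalence closure of the one-step transformation. -/
def FEq (t u : RingTerm R) : Prop := Relation.EqvGen Step t u

end RingTerm

namespace RingTerm

variable {R : Type*}

/-- The number of occurrences of the variable `X i` in a term. -/
def varCount : RingTerm R → ℕ → ℕ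
  | X j, i => if j = i then 1 else 0
  | C _, _ => 0
  | zero, _ => 0
  | one, _ => 0
  | add t u, i => varCount t i + varCount u i
  | mul t u, i => varCount t i + varCount u i

/-- A term built only from variables and the binary symbol `·`. -/
def MulOnly : RingTerm R → Prop
  | X _ => True
  | mul t u => MulOnly t ∧ MulOnly u
  | _ => False

/-- An `m̄`-monomial: a term built only from variables and `·` in which each
variable `X i` occurs exactly `m̄ i` times; for `m̄ = 0` it is the term `1`. -/
def IsMonomial (m : ℕ →₀ ℕ) (t : RingTerm R) : Prop :=
  (m = 0 ∧ t = one) ∨ (MulOnly t ∧ ∀ i, varCount t i = m i)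

/-- Nonempty iterated sums: `IsSumOfPos l s` holds iff `s` is obtained from a
term built only from variables (each occurring exactly once) and `+` by
substituting the terms of the multiset `l` for the variables. -/
inductive IsSumOfPos : Multiset (RingTerm R) → RingTerm R → Prop where
  | single (t : RingTerm R) : IsSumOfPos {t} t
  | add {l l' : Multiset (RingTerm R)} {s s' : RingTerm R} :
      IsSumOfPos l s → IsSumOfPos l' s' → IsSumOfPos (l + l') (add s s')

/-- `s` is a sum of the terms in the multiset `l`; for `l = 0` the unique sum
is the term `0`. -/
def IsSumOf (l : Multiset (RingTerm R)) (s : RingTerm R) : Prop :=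
  (l = 0 ∧ s = zero) ∨ IsSumOfPos l s

end RingTerm

namespace RingTerm

variable {R : Type*} [CommRing R]

theorem FEq.rfl' (t : RingTerm R) : FEq t t := Relation.EqvGen.refl t

theorem FEq.symm' {t u : RingTerm R} (h : FEq t u) : FEq u t :=
  Relation.EqvGen.symm _ _ h

theorem FEq.trans' {t u v : RingTerm R} (h : FEq t u) (h' : FEq u v) : FEq t v :=
  Relation.EqvGen.trans _ _ _ h h'

theorem feq_mulRight (w : RingTerm R) {t u : RingTerm R} (h : FEq t u) :
    FEq (mul w t) (mul w u) := by
  induction h with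
  | rel a b hab => exact Relation.EqvGen.rel _ _ (Step.mulRight w hab)
  | refl a => exact Relation.EqvGen.refl _
  | symm a b _ ih => exact Relation.EqvGen.symm _ _ ih
  | trans a b c _ _ ih1 ih2 => exact Relation.EqvGen.trans _ _ _ ih1 ih2

theorem feq_mulLeft (w : RingTerm R) {t u : RingTerm R} (h : FEq t u) :
    FEq (mul t w) (mul u w) := by
  induction h with
  | rel a b hab => exact Relation.EqvGen.rel _ _ (Step.mulLeft w hab)
  | refl a => exact Relation.EqvGen.refl _
  | symm a b _ ih => exact Relation.EqvGen.symm _ _ ih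
  | trans a b c _ _ ih1 ih2 => exact Relation.EqvGen.trans _ _ _ ih1 ih2

/-- Number of variable leaves. -/
def leafCount : RingTerm R → ℕ
  | X _ => 1
  | mul t u => leafCount t + leafCount u
  | _ => 0

theorem exists_var : ∀ {t : RingTerm R}, MulOnly t → ∃ j, 1 ≤ varCount t j
  | X j, _ => ⟨j, by simp [varCount]⟩
  | mul a b, h => by
    obtain ⟨j, hj⟩ := exists_var h.1
    exact ⟨j, by simp only [varCount]; omega⟩

theorem one_le_leafCount : ∀ {t : RingTerm R}, MulOnly t → 1 ≤ leafCount t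
  | X j, _ => le_refl _
  | mul a b, h => by
    have := one_le_leafCount h.1
    simp only [leafCount]; omega

theorem extract : ∀ (t : RingTerm R) (j : ℕ), MulOnly t → 1 ≤ varCount t j →
    (t = X j) ∨ ∃ t', MulOnly t' ∧ FEq t (mul (X j) t') ∧
      (∀ i, (if j = i then 1 else 0) + varCount t' i = varCount t i) ∧
      (1 + leafCount t' = leafCount t)
  | X k, j, _, hv => by
    left
    have : k = j := by by_contra h; simp [varCount, h] at hv
    subst this; rfl
  | mul a b, j, ⟨ha, hb⟩, hv => by
    right
    by_cases hcase : 1 ≤ varCount a j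
    · rcases extract a j ha hcase with rfl | ⟨a', ha', hfa, hca, hla⟩
      · exact ⟨b, hb, FEq.rfl' _, fun i => by simp only [varCount], rfl⟩
      · refine ⟨mul a' b, ⟨ha', hb⟩, ?_, ?_, ?_⟩
        · refine FEq.trans' (feq_mulLeft b hfa) ?_
          exact FEq.symm' (Relation.EqvGen.rel _ _ (Step.et8 (X j) a' b))
        · intro i
          have := hca i
          simp only [varCount] at *
          omega
        · simp only [leafCount] at *; omega
    · have hvb : 1 ≤ varCount b j := by simp only [varCount] at hv; omega
      have hswap : FEq (mul a b) (mul b a) :=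
        Relation.EqvGen.rel _ _ (Step.et6 a b)
      rcases extract b j hb hvb with rfl | ⟨b', hb', hfb, hcb, hlb⟩
      · refine ⟨a, ha, hswap, ?_, ?_⟩
        · intro i; simp only [varCount]; omega
        · simp only [leafCount]; omega
      · refine ⟨mul b' a, ⟨hb', ha⟩, ?_, ?_, ?_⟩
        · refine FEq.trans' hswap (FEq.trans' (feq_mulLeft a hfb) ?_)
          exact FEq.symm' (Relation.EqvGen.rel _ _ (Step.et8 (X j) b' a))
        · intro i
          have := hcb i
          simp only [varCount] at *
          omega
        · simp only [leafCount] at *; omega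

theorem mulonly_feq : ∀ (n : ℕ) (t u : RingTerm R), leafCount t ≤ n →
    MulOnly t → MulOnly u → (∀ i, varCount t i = varCount u i) → FEq t u := by
  intro n
  induction n with
  | zero =>
    intro t u hle ht _ _
    have := one_le_leafCount ht
    omega
  | succ n ih =>
    intro t u hle ht hu hc
    obtain ⟨j, hj⟩ := exists_var ht
    have hj' : 1 ≤ varCount u j := by rw [← hc j]; exact hj
    rcases extract t j ht hj with rfl | ⟨t', ht', hft, hct, hlt⟩
    · rcases extract u j hu hj' with rfl | ⟨u', hu', hfu, hcu, _⟩
      · exact FEq.rfl' _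
      · exfalso
        obtain ⟨k, hk⟩ := exists_var hu'
        have h1 := hcu k
        have h2 := hc k
        by_cases hkj : k = j
        · subst hkj; simp [varCount] at h1 h2; omega
        · simp [varCount, hkj] at h1 h2; omega
    · rcases extract u j hu hj' with rfl | ⟨u', hu', hfu, hcu, _⟩
      · exfalso
        obtain ⟨k, hk⟩ := exists_var ht'
        have h1 := hct k
        have h2 := hc k
        by_cases hkj : k = j
        · subst hkj; simp [varCount] at h1 h2; omega
        · simp [varCount, hkj] at h1 h2; omega
      · have hrec : FEq t' u' := by
          apply ih t' u' (by omega) ht' hu'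
          intro i
          have := hct i; have := hcu i; have := hc i
          omega
        exact FEq.trans' hft (FEq.trans' (feq_mulRight _ hrec) (FEq.symm' hfu))

end RingTerm

open RingTerm in
/-- any two `m̄`-monomials are f-equivalent. -/
theorem monomials_feq {R : Type*} [CommRing R] (m : ℕ →₀ ℕ)
    (t u : RingTerm R) (ht : IsMonomial m t) (hu : IsMonomial m u) :
    FEq t u := by
  rcases ht with ⟨hm, rfl⟩ | ⟨hmt, hvt⟩
  · rcases hu with ⟨_, rfl⟩ | ⟨hmu, hvu⟩
    · exact Relation.EqvGen.refl _
    · exfalso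
      obtain ⟨j, hj⟩ := exists_var hmu
      rw [hvu j, hm] at hj
      simp at hj
  · rcases hu with ⟨hm, rfl⟩ | ⟨hmu, hvu⟩
    · exfalso
      obtain ⟨j, hj⟩ := exists_var hmt
      rw [hvt j, hm] at hj
      simp at hj
    · exact mulonly_feq (leafCount t) t u le_rfl hmt hmu
        (fun i => by rw [hvt i, hvu i])
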